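/- Let N be a positive integer, let M be an N × N Hermitian complex matrix, let Λ > 0 satisfy ‖M‖ ≤ Λ (operator norm), and let ψ ∈ ℂ^N be a unit vector. Let C be the 2N × 2N block matrix C = fromBlocks(I_N, 0, 0, M/Λ), i.e. C = |0⟩⟨0| ⊗ I_N + |1⟩⟨1| ⊗ (M/Λ), and let χ ∈ ℂ^{2N} be the unit vector χ = (1/√2)·(ψ, ψ), i.e. χ = |+⟩ ⊗ ψ. Then ⟨ψ, Mψ⟩ = Λ·(2·|⟨χ, Cχ⟩| − 1). (Here ⟨ψ, Mψ⟩ is real since M is Hermitian.) -/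

import Mathlib

open Matrix

/-- The operator norm of a complex matrix with respect to the Euclidean norm on `ℂ^N`. -/
noncomputable def l2OpNorm {N : ℕ} (M : Matrix (Fin N) (Fin N) ℂ) : ℝ :=
  ‖Matrix.toEuclideanCLM (𝕜 := ℂ) M‖

/-- Let `M` be an `N × N` Hermitian matrix with `‖M‖ ≤ Λ`, `Λ > 0`, and let `ψ ∈ ℂ^N` be a
unit vector. With `C = fromBlocks(I, 0, 0, M/Λ) = |0⟩⟨0| ⊗ I + |1⟩⟨1| ⊗ (M/Λ)` and
`χ = (1/√2)·(ψ, ψ) = |+⟩ ⊗ ψ`, we have `⟨ψ, Mψ⟩ = Λ·(2·|⟨χ, Cχ⟩| − 1)`. -/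
theorem expectation_eq_amplitude (N : ℕ) (hN : 0 < N)
    (M : Matrix (Fin N) (Fin N) ℂ) (hM : M.IsHermitian)
    (Λ : ℝ) (hΛ : 0 < Λ) (hMΛ : l2OpNorm M ≤ Λ)
    (ψ : Fin N → ℂ) (hψ : star ψ ⬝ᵥ ψ = 1)
    (C : Matrix (Fin N ⊕ Fin N) (Fin N ⊕ Fin N) ℂ)
    (hC : C = Matrix.fromBlocks 1 0 0 ((Λ : ℂ)⁻¹ • M))
    (χ : Fin N ⊕ Fin N → ℂ)
    (hχ : χ = Sum.elim (((Real.sqrt 2)⁻¹ : ℂ) • ψ) (((Real.sqrt 2)⁻¹ : ℂ) • ψ)) :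
    star ψ ⬝ᵥ M.mulVec ψ
      = ((Λ * (2 * ‖star χ ⬝ᵥ C.mulVec χ‖ - 1) : ℝ) : ℂ) := by
  -- e is real
  have hconj : (starRingEnd ℂ) (star ψ ⬝ᵥ M.mulVec ψ) = star ψ ⬝ᵥ M.mulVec ψ := by
    calc (starRingEnd ℂ) (star ψ ⬝ᵥ M.mulVec ψ)
        = star (star ψ ⬝ᵥ M.mulVec ψ) := rfl
      _ = star (M.mulVec ψ) ⬝ᵥ star (star ψ) := (star_dotProduct_star _ _).symm
      _ = (star ψ ᵥ* Mᴴ) ⬝ᵥ ψ := by rw [star_mulVec, star_star]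
      _ = star ψ ⬝ᵥ Mᴴ.mulVec ψ := (dotProduct_mulVec _ _ _).symm
      _ = star ψ ⬝ᵥ M.mulVec ψ := by rw [hM]
  set r : ℝ := (star ψ ⬝ᵥ M.mulVec ψ).re with hr
  have he : star ψ ⬝ᵥ M.mulVec ψ = (r : ℂ) := by
    apply Complex.ext
    · simp [hr]
    · have := congrArg Complex.im hconj
      simp only [Complex.ofReal_im]
      simp at this
      linarith
  -- bound |r| ≤ Λ
  have hbound : |r| ≤ Λ := by
    set ψ' : EuclideanSpace ℂ (Fin N) := (WithLp.equiv 2 _).symm ψ with hψ'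
    have hinner : (inner ℂ ψ' ((Matrix.toEuclideanCLM (𝕜 := ℂ) M) ψ') : ℂ)
        = star ψ ⬝ᵥ M.mulVec ψ := by
      rw [hψ']
      show dotProduct (M.mulVec ψ) (star ψ) = _
      rw [dotProduct_comm]
    have hnorm : ‖ψ'‖ = 1 := by
      have h1 : (inner ℂ ψ' ψ' : ℂ) = 1 := by
        rw [hψ']
        show dotProduct ψ (star ψ) = 1
        rw [dotProduct_comm, hψ]
      have h2 : ‖ψ'‖ ^ 2 = RCLike.re (inner ℂ ψ' ψ' : ℂ) := norm_sq_eq_re_inner ψ'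
      rw [h1] at h2
      simp at h2
      rcases h2 with h | h
      · exact h
      · nlinarith [norm_nonneg ψ']
    have h2 : ‖star ψ ⬝ᵥ M.mulVec ψ‖ ≤ Λ := by
      rw [← hinner]
      calc ‖(inner ℂ ψ' ((Matrix.toEuclideanCLM (𝕜 := ℂ) M) ψ') : ℂ)‖
          ≤ ‖ψ'‖ * ‖(Matrix.toEuclideanCLM (𝕜 := ℂ) M) ψ'‖ := norm_inner_le_norm _ _
        _ = ‖(Matrix.toEuclideanCLM (𝕜 := ℂ) M) ψ'‖ := by rw [hnorm, one_mul]
        _ ≤ ‖Matrix.toEuclideanCLM (𝕜 := ℂ) M‖ * ‖ψ'‖ :=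
            ContinuousLinearMap.le_opNorm _ _
        _ = ‖Matrix.toEuclideanCLM (𝕜 := ℂ) M‖ := by rw [hnorm, mul_one]
        _ ≤ Λ := hMΛ
    rw [he] at h2
    simpa using h2
  -- compute the amplitude
  have hamp : star χ ⬝ᵥ C.mulVec χ = (2 : ℂ)⁻¹ * (1 + (Λ : ℂ)⁻¹ * r) := by
    subst hC hχ
    set a : ℂ := ((Real.sqrt 2 : ℝ) : ℂ)⁻¹ with ha
    have hs : star a = a := by
      rw [ha, ← Complex.ofReal_inv, Complex.star_def, Complex.conj_ofReal]
    have h2 : a * a = 2⁻¹ := by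
      rw [ha, ← mul_inv, ← Complex.ofReal_mul, Real.mul_self_sqrt (by norm_num)]
      norm_num
    have hstar : star (Sum.elim (a • ψ) (a • ψ))
        = Sum.elim (star (a • ψ)) (star (a • ψ)) := by
      funext x; cases x <;> rfl
    rw [Matrix.fromBlocks_mulVec, hstar]
    simp only [Sum.elim_comp_inl, Sum.elim_comp_inr, Matrix.zero_mulVec, add_zero,
      zero_add, Matrix.one_mulVec, sumElim_dotProduct_sumElim,
      Matrix.smul_mulVec, Matrix.mulVec_smul, star_smul, smul_dotProduct,
      dotProduct_smul, hψ, he, smul_eq_mul, hs]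
    simp only [smul_zero, add_zero, zero_add, dotProduct_smul, smul_eq_mul, hψ, he]
    linear_combination (1 + (Λ : ℂ)⁻¹ * (r : ℂ)) * h2
  rw [hamp, he]
  have habs : ‖(2 : ℂ)⁻¹ * (1 + (Λ : ℂ)⁻¹ * r)‖ = 2⁻¹ * (1 + Λ⁻¹ * r) := by
    have : ((2 : ℂ)⁻¹ * (1 + (Λ : ℂ)⁻¹ * r)) = ((2⁻¹ * (1 + Λ⁻¹ * r) : ℝ) : ℂ) := by
      push_cast; ring
    rw [this, Complex.norm_real, Real.norm_eq_abs, abs_of_nonneg]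
    have : Λ⁻¹ * r ≥ -1 := by
      rw [ge_iff_le, neg_le, ← neg_mul]
      calc -Λ⁻¹ * r ≤ |(-Λ⁻¹ * r)| := le_abs_self _
        _ = Λ⁻¹ * |r| := by rw [abs_mul, abs_neg, abs_of_nonneg (by positivity)]
        _ ≤ Λ⁻¹ * Λ := by gcongr
        _ = 1 := inv_mul_cancel₀ hΛ.ne'
    nlinarith
  rw [habs]
  have hΛ' : (Λ : ℂ) ≠ 0 := by exact_mod_cast hΛ.ne'
  push_cast
  field_simp
  ring
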